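/- Let l ≥ 4 and (p₁, …, p_l) be as in the context. If x₁, …, x_l ∈ ℕ and n = Σᵢ xᵢ·(P/pᵢ), then Δ(n) = 1 + Σᵢ ⌊xᵢ/pᵢ⌋. -/

import Mathlib

/-- For `l ≥ 4`: if `n = Σᵢ xᵢ·(P/pᵢ)` with `xᵢ ∈ ℕ`, then `Δ(n) = 1 + Σᵢ ⌊xᵢ/pᵢ⌋`. -/
theorem stmt_11 (l : ℕ) (hl : 4 ≤ l) (p : Fin l → ℕ)
    (hp1 : ∀ i, 1 < p i) (hmono : StrictMono p)
    (hcop : ∀ i j, i ≠ j → Nat.Coprime (p i) (p j))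
    (e0 : ℤ) (p' : Fin l → ℕ) (hp' : ∀ i, p' i ≤ p i - 1)
    (heq : e0 * ∏ i, (p i : ℤ)
      + ∑ i, (∏ j ∈ Finset.univ.erase i, (p j : ℤ)) * (p' i : ℤ) = -1)
    (Δ : ℕ → ℤ)
    (hΔ : ∀ n : ℕ, Δ n = 1 + |e0| * n - ∑ i, ⌈(n * p' i : ℚ) / p i⌉)
    (x : Fin l → ℕ) (n : ℕ)
    (hn : n = ∑ i, x i * ∏ j ∈ Finset.univ.erase i, p j) :
    Δ n = 1 + ∑ i, ((x i / p i : ℕ) : ℤ) := by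
  have hppos : ∀ i, 0 < p i := fun i => lt_trans one_pos (hp1 i)
  set P : ℤ := ∏ i, (p i : ℤ) with hPdef
  have hPpos : 0 < P := Finset.prod_pos fun i _ => by exact_mod_cast hppos i
  set Qn : Fin l → ℕ := fun i => ∏ j ∈ Finset.univ.erase i, p j with hQndef
  have hQc : ∀ i, ((Qn i : ℕ) : ℤ) = ∏ j ∈ Finset.univ.erase i, (p j : ℤ) := by
    intro i; simp [hQndef]
  have hE : ∀ i, (p i : ℤ) * (Qn i : ℤ) = P := by
    intro i
    rw [hQc i, hPdef]
    exact Finset.mul_prod_erase Finset.univ (fun j => (p j : ℤ)) (Finset.mem_univ i)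
  have hD : e0 * P + ∑ i, (Qn i : ℤ) * (p' i : ℤ) = -1 := by
    simp only [hQc]; exact heq
  have hC : (n : ℤ) = ∑ i, (x i : ℤ) * (Qn i : ℤ) := by
    rw [hn]; push_cast [hQndef]; rfl
  -- e0 < 0
  have hsumnn : 0 ≤ ∑ i, (Qn i : ℤ) * (p' i : ℤ) :=
    Finset.sum_nonneg fun i _ => by positivity
  have he0 : e0 < 0 := by
    by_contra h
    push_neg at h
    nlinarith
  -- key congruence facts mod p i
  have hQmod : ∀ i, (Qn i : ZMod (p i)) * (p' i : ZMod (p i)) = -1 := by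
    intro i
    have h := congrArg (fun z : ℤ => (z : ZMod (p i))) hD
    push_cast at h
    rw [show ((P : ℤ) : ZMod (p i)) = 0 by
        rw [hPdef]; push_cast
        exact Finset.prod_eq_zero (Finset.mem_univ i) (ZMod.natCast_self (p i))] at h
    rw [Finset.sum_eq_single i
        (fun j _ hj => by
          rw [show ((Qn j : ℕ) : ZMod (p i)) = 0 by
            rw [hQndef]; push_cast
            exact Finset.prod_eq_zero (Finset.mem_erase.mpr ⟨Ne.symm hj, Finset.mem_univ i⟩)
              (ZMod.natCast_self (p i))]
          exact zero_mul _)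
        (fun h => absurd (Finset.mem_univ i) h)] at h
    rw [mul_zero, zero_add] at h
    exact h
  have hnmod : ∀ i, (n : ZMod (p i)) = (x i : ZMod (p i)) * (Qn i : ZMod (p i)) := by
    intro i
    have h := congrArg (fun z : ℕ => (z : ZMod (p i))) hn
    push_cast at h
    rw [Finset.sum_eq_single i
        (fun j _ hj => by
          rw [show (∏ k ∈ Finset.univ.erase j, ((p k : ZMod (p i)))) = 0 from
            Finset.prod_eq_zero (Finset.mem_erase.mpr ⟨Ne.symm hj, Finset.mem_univ i⟩)
              (ZMod.natCast_self (p i))]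
          exact mul_zero _)
        (fun h => absurd (Finset.mem_univ i) h)] at h
    rw [h]
    congr 1
    rw [hQndef]; push_cast; rfl
  have hdvd : ∀ i, p i ∣ n * p' i + x i % p i := by
    intro i
    rw [← ZMod.natCast_eq_zero_iff]
    push_cast
    rw [ZMod.natCast_mod]
    linear_combination (p' i : ZMod (p i)) * hnmod i + (x i : ZMod (p i)) * hQmod i
  -- the exact values of the ceilings
  set k : Fin l → ℕ := fun i => (n * p' i + x i % p i) / p i with hkdef
  have hk : ∀ i, (p i : ℤ) * (k i : ℤ) = (n : ℤ) * (p' i : ℤ) + ((x i % p i : ℕ) : ℤ) := by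
    intro i
    have := Nat.mul_div_cancel' (hdvd i)
    exact_mod_cast congrArg (fun m : ℕ => (m : ℤ)) this
  have hceil : ∀ i, ⌈((n : ℚ) * (p' i : ℚ)) / (p i : ℚ)⌉ = (k i : ℤ) := by
    intro i
    have hpq : (0 : ℚ) < (p i : ℚ) := by exact_mod_cast hppos i
    have hkq : (p i : ℚ) * (k i : ℚ) = (n : ℚ) * (p' i : ℚ) + ((x i % p i : ℕ) : ℚ) := by
      exact_mod_cast congrArg (fun z : ℤ => (z : ℚ)) (hk i)
    have hrq : ((x i % p i : ℕ) : ℚ) < (p i : ℚ) := by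
      exact_mod_cast Nat.mod_lt (x i) (hppos i)
    have hrq0 : (0 : ℚ) ≤ ((x i % p i : ℕ) : ℚ) := by positivity
    rw [Int.ceil_eq_iff]
    constructor
    · rw [← sub_pos]
      have : ((n : ℚ) * (p' i : ℚ)) / (p i : ℚ) - (((k i : ℤ) : ℚ) - 1)
          = ((n : ℚ) * (p' i : ℚ) - ((k i : ℚ) - 1) * (p i : ℚ)) / (p i : ℚ) := by
        field_simp
        push_cast
        ring
      rw [this]
      apply div_pos _ hpq
      nlinarith
    · rw [div_le_iff₀ hpq]
      push_cast
      nlinarith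
  -- main computation
  rw [hΔ n, abs_of_neg he0]
  rw [show (∑ i, ⌈((n : ℚ) * (p' i : ℚ)) / (p i : ℚ)⌉) = ∑ i, (k i : ℤ) from
    Finset.sum_congr rfl fun i _ => hceil i]
  set d : Fin l → ℕ := fun i => x i / p i with hddef
  have hB : ∀ i, (p i : ℤ) * (d i : ℤ) = (x i : ℤ) - ((x i % p i : ℕ) : ℤ) := by
    intro i
    have h : ((p i * (x i / p i) + x i % p i : ℕ) : ℤ) = (x i : ℤ) :=
      congrArg _ (Nat.div_add_mod (x i) (p i))
    simp only [hddef]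
    push_cast at h ⊢
    linarith
  have SK : ∑ i, P * (k i : ℤ)
      = (n : ℤ) * (∑ i, (Qn i : ℤ) * (p' i : ℤ)) + ∑ i, (Qn i : ℤ) * ((x i % p i : ℕ) : ℤ) := by
    calc ∑ i, P * (k i : ℤ)
        = ∑ i, ((n : ℤ) * ((Qn i : ℤ) * (p' i : ℤ)) + (Qn i : ℤ) * ((x i % p i : ℕ) : ℤ)) := by
          refine Finset.sum_congr rfl fun i _ => ?_
          linear_combination (-(k i : ℤ)) * hE i + (Qn i : ℤ) * hk i
      _ = _ := by rw [Finset.sum_add_distrib, ← Finset.mul_sum]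
  have SD : ∑ i, P * (d i : ℤ)
      = (∑ i, (x i : ℤ) * (Qn i : ℤ)) - ∑ i, (Qn i : ℤ) * ((x i % p i : ℕ) : ℤ) := by
    calc ∑ i, P * (d i : ℤ)
        = ∑ i, ((x i : ℤ) * (Qn i : ℤ) - (Qn i : ℤ) * ((x i % p i : ℕ) : ℤ)) := by
          refine Finset.sum_congr rfl fun i _ => ?_
          linear_combination (-(d i : ℤ)) * hE i + (Qn i : ℤ) * hB i
      _ = _ := by rw [Finset.sum_sub_distrib]
  have main : P * (1 + -e0 * (n : ℤ) - ∑ i, (k i : ℤ))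
      = P * (1 + ∑ i, (d i : ℤ)) := by
    rw [mul_sub, mul_add, mul_add, mul_one, Finset.mul_sum, Finset.mul_sum, SK, SD]
    linear_combination (-(n : ℤ)) * hD + hC
  have := mul_left_cancel₀ (ne_of_gt hPpos) main
  simpa [hddef] using this
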